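/- There exists a universal constant C > 0 such that for all integers n, W ≥ 1, every real λ ≥ 0, and every permutation τ of [-n,n], the number of π ∈ S_W with max C_π(0) > λ + 2W and Φ_λ(π) = τ is at most C·W². -/

import Mathlib

open Finset

/-- The integer interval `[-n, n]`, as a type. -/
abbrev Box (n : ℕ) : Type := {x : ℤ // x ∈ Finset.Icc (-(n : ℤ)) (n : ℤ)}

/-- The point `0 ∈ [-n, n]`. -/
def boxZero (n : ℕ) : Box n :=
  ⟨0, by simp⟩

/-- The maximum of the cycle of `j` under `π`, i.e. `max C_π(j)` where
`C_π(j) = {π^k(j) : k ∈ ℤ}`. -/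
noncomputable def maxCycle {n : ℕ} (π : Equiv.Perm (Box n)) (j : Box n) : ℤ :=
  sSup {x : ℤ | ∃ k : ℤ, (((π ^ k) j : Box n) : ℤ) = x}

/-- The minimum of the cycle of `j` under `π`. -/
noncomputable def minCycle {n : ℕ} (π : Equiv.Perm (Box n)) (j : Box n) : ℤ :=
  sInf {x : ℤ | ∃ k : ℤ, (((π ^ k) j : Box n) : ℤ) = x}

/-- The diameter of the cycle of `j` under `π`. -/
noncomputable def diamCycle {n : ℕ} (π : Equiv.Perm (Box n)) (j : Box n) : ℤ :=
  maxCycle π j - minCycle π j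

/-- The Boltzmann–Gibbs weight `exp(-W^{-p} Σ_i |π(i) - i|^p)`. -/
noncomputable def gibbsWeight (p : ℝ) (W n : ℕ) (π : Equiv.Perm (Box n)) : ℝ :=
  Real.exp (-(W : ℝ) ^ (-p) * ∑ i : Box n, |((π i : ℤ) : ℝ) - ((i : ℤ) : ℝ)| ^ p)

open scoped Classical in
/-- The probability of the event `E` under the Gibbs measure `P_{p,W,n}`. -/
noncomputable def gibbsProb (p : ℝ) (W n : ℕ) (E : Set (Equiv.Perm (Box n))) : ℝ :=
  (∑ π : Equiv.Perm (Box n), if π ∈ E then gibbsWeight p W n π else 0) /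
    ∑ π : Equiv.Perm (Box n), gibbsWeight p W n π

/-- The probability of a single permutation under the Gibbs measure `P_{p,W,n}`. -/
noncomputable def gibbsP (p : ℝ) (W n : ℕ) (π : Equiv.Perm (Box n)) : ℝ :=
  gibbsWeight p W n π / ∑ σ : Equiv.Perm (Box n), gibbsWeight p W n σ

/-- The set `S_W` of permutations displacing each point by at most `W`. -/
def SW (n W : ℕ) : Set (Equiv.Perm (Box n)) :=
  {π | ∀ i : Box n, |(π i : ℤ) - (i : ℤ)| ≤ (W : ℤ)}

open scoped Classical in
/-- The probability of the event `E` under the uniform measure `P_{∞,W,n}` on `S_W`. -/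
noncomputable def unifProb (W n : ℕ) (E : Set (Equiv.Perm (Box n))) : ℝ :=
  ((Finset.univ.filter fun π : Equiv.Perm (Box n) => π ∈ SW n W ∧ π ∈ E).card : ℝ) /
    ((Finset.univ.filter fun π : Equiv.Perm (Box n) => π ∈ SW n W).card : ℝ)

/-- `Period(π, j)`: the least positive `m` with `π^m(j) = j`. -/
noncomputable def permPeriod {n : ℕ} (π : Equiv.Perm (Box n)) (j : Box n) : ℕ :=
  sInf {m : ℕ | 0 < m ∧ (π ^ m) j = j}

/-- `i_first(π)` for the threshold `t`. -/
noncomputable def iFirst {n : ℕ} (t : ℝ) (π : Equiv.Perm (Box n)) : ℕ :=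
  sInf {j : ℕ | ((((π ^ j) (boxZero n) : Box n) : ℤ) : ℝ) ≤ t ∧
    t < ((((π ^ (j + 1)) (boxZero n) : Box n) : ℤ) : ℝ)}

/-- `i_last(π)` for the threshold `t`. -/
noncomputable def iLast {n : ℕ} (t : ℝ) (π : Equiv.Perm (Box n)) : ℕ :=
  sSup {j : ℕ | j < permPeriod π (boxZero n) ∧
    ((((π ^ (j + 1)) (boxZero n) : Box n) : ℤ) : ℝ) ≤ t ∧
    t < ((((π ^ j) (boxZero n) : Box n) : ℤ) : ℝ)}

/-- The uncrossing map `Φ_t(π) = π ∘ (π^{i_first+1}(0)  π^{i_last+1}(0))`. -/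
noncomputable def Phi {n : ℕ} (t : ℝ) (π : Equiv.Perm (Box n)) : Equiv.Perm (Box n) :=
  π * Equiv.swap ((π ^ (iFirst t π + 1)) (boxZero n)) ((π ^ (iLast t π + 1)) (boxZero n))


open scoped Classical in
lemma crossing_bounds {n W : ℕ} {t : ℝ} (ht : 0 ≤ t)
    {π : Equiv.Perm (Box n)} (hSW : π ∈ SW n W)
    (hmax : t < ((maxCycle π (boxZero n) : ℤ) : ℝ)) :
    (t < (((π ^ (iFirst t π + 1)) (boxZero n) : ℤ) : ℝ) ∧
      (((π ^ (iFirst t π + 1)) (boxZero n) : ℤ) : ℝ) ≤ t + W) ∧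
    (t - W < (((π ^ (iLast t π + 1)) (boxZero n) : ℤ) : ℝ) ∧
      (((π ^ (iLast t π + 1)) (boxZero n) : ℤ) : ℝ) ≤ t) := by
  set z := boxZero n with hz
  have hz0 : ((z : Box n) : ℤ) = 0 := rfl
  -- the period is well-defined
  have hPset : (permPeriod π z) ∈ {m : ℕ | 0 < m ∧ (π ^ m) z = z} := by
    apply Nat.sInf_mem
    exact ⟨orderOf π, orderOf_pos π, by rw [pow_orderOf_eq_one]; rfl⟩
  set P := permPeriod π z with hPdef
  obtain ⟨hPpos, hPz⟩ := hPset
  -- periodicity of the orbit of z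
  have hper : ∀ q r : ℕ, (π ^ (q * P + r)) z = (π ^ r) z := by
    intro q
    induction q with
    | zero => simp
    | succ q ih =>
      intro r
      have h1 : (q + 1) * P + r = (q * P + r) + P := by ring
      rw [h1, pow_add, Equiv.Perm.mul_apply, hPz, ih r]
  have hmod : ∀ j : ℕ, (π ^ (j % P)) z = (π ^ j) z := by
    intro j
    conv_rhs => rw [← Nat.div_add_mod j P]
    rw [Nat.mul_comm, hper]
  -- there is a natural iterate exceeding t
  have hex : ∃ m : ℕ, t < (((π ^ m) z : ℤ) : ℝ) := by
    have hne : {x : ℤ | ∃ k : ℤ, (((π ^ k) z : Box n) : ℤ) = x}.Nonempty :=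
      ⟨((z : Box n) : ℤ), 0, by simp⟩
    have hbdd : BddAbove {x : ℤ | ∃ k : ℤ, (((π ^ k) z : Box n) : ℤ) = x} := by
      refine ⟨(n : ℤ), ?_⟩
      rintro x ⟨k, rfl⟩
      exact (Finset.mem_Icc.mp ((π ^ k) z).2).2
    obtain ⟨k, hk⟩ := Int.csSup_mem hne hbdd
    have hk' : t < ((((π ^ k) z : Box n) : ℤ) : ℝ) := by
      rw [hk]; exact hmax
    set m : ℕ := (k % (orderOf π : ℤ)).toNat with hm
    have hnn : (0 : ℤ) ≤ k % (orderOf π : ℤ) :=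
      Int.emod_nonneg k (by exact_mod_cast (orderOf_pos π).ne')
    have heq : π ^ k = π ^ m := by
      rw [← zpow_mod_orderOf π k, ← zpow_natCast, hm, Int.toNat_of_nonneg hnn]
    exact ⟨m, by rw [← heq]; exact hk'⟩
  obtain ⟨m, hm⟩ := hex
  -- displacement bounds as reals
  have hdisp : ∀ x : Box n, (((x : ℤ) : ℝ)) - W ≤ ((π x : ℤ) : ℝ) ∧
      ((π x : ℤ) : ℝ) ≤ ((x : ℤ) : ℝ) + W := by
    intro x
    have h := hSW x
    have h1 := abs_le.mp h
    constructor
    · have : ((x : ℤ)) - W ≤ (π x : ℤ) := by omega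
      calc (((x : ℤ) : ℝ)) - W = (((x : ℤ) - W : ℤ) : ℝ) := by push_cast; ring
        _ ≤ _ := by exact_mod_cast this
    · have : (π x : ℤ) ≤ (x : ℤ) + W := by omega
      calc ((π x : ℤ) : ℝ) ≤ (((x : ℤ) + W : ℤ) : ℝ) := by exact_mod_cast this
        _ = ((x : ℤ) : ℝ) + W := by push_cast; ring
  constructor
  · -- iFirst bounds
    set A := {j : ℕ | ((((π ^ j) z : Box n) : ℤ) : ℝ) ≤ t ∧
        t < ((((π ^ (j + 1)) z : Box n) : ℤ) : ℝ)} with hA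
    have hAne : A.Nonempty := by
      set j₁ := sInf {j : ℕ | t < ((((π ^ j) z : Box n) : ℤ) : ℝ)} with hj₁
      have hj₁mem : j₁ ∈ {j : ℕ | t < ((((π ^ j) z : Box n) : ℤ) : ℝ)} :=
        Nat.sInf_mem ⟨m, hm⟩
      have hj₁pos : j₁ ≠ 0 := by
        intro h0
        rw [h0] at hj₁mem
        simp only [pow_zero, Equiv.Perm.coe_one, id_eq, Set.mem_setOf_eq] at hj₁mem
        rw [hz0] at hj₁mem
        norm_num at hj₁mem
        linarith
      obtain ⟨j₀, hj₀eq⟩ := Nat.exists_eq_succ_of_ne_zero hj₁pos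
      have hj₀ : j₀ ∉ {j : ℕ | t < ((((π ^ j) z : Box n) : ℤ) : ℝ)} :=
        Nat.notMem_of_lt_sInf (by rw [← hj₁]; omega)
      rw [hj₀eq] at hj₁mem
      exact ⟨j₀, le_of_not_gt hj₀, hj₁mem⟩
    have hiF : iFirst t π ∈ A := by
      have : iFirst t π = sInf A := rfl
      rw [this]; exact Nat.sInf_mem hAne
    obtain ⟨hle, hlt⟩ := hiF
    refine ⟨hlt, ?_⟩
    have hstep : (π ^ (iFirst t π + 1)) z = π ((π ^ iFirst t π) z) := by
      rw [pow_succ', Equiv.Perm.mul_apply]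
    rw [hstep]
    calc ((π ((π ^ iFirst t π) z) : ℤ) : ℝ) ≤ (((π ^ iFirst t π) z : ℤ) : ℝ) + W :=
          (hdisp _).2
      _ ≤ t + W := by linarith
  · -- iLast bounds
    set B := {j : ℕ | j < P ∧ ((((π ^ (j + 1)) z : Box n) : ℤ) : ℝ) ≤ t ∧
        t < ((((π ^ j) z : Box n) : ℤ) : ℝ)} with hB
    have hBne : B.Nonempty := by
      set m' := m % P with hm'
      have hm'lt : m' < P := Nat.mod_lt m hPpos
      have hm't : t < ((((π ^ m') z : Box n) : ℤ) : ℝ) := by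
        rw [hm', hmod]; exact hm
      set D := {d : ℕ | 0 < d ∧ ((((π ^ (m' + d)) z : Box n) : ℤ) : ℝ) ≤ t} with hD
      have hDmem : P - m' ∈ D := by
        refine ⟨by omega, ?_⟩
        have : m' + (P - m') = P := by omega
        rw [this, hPz, hz0]
        norm_num; exact ht
      set d := sInf D with hd
      have hdmem : d ∈ D := Nat.sInf_mem ⟨P - m', hDmem⟩
      have hdle : d ≤ P - m' := Nat.sInf_le hDmem
      obtain ⟨hdpos, hdle'⟩ := hdmem
      refine ⟨m' + d - 1, by omega, ?_, ?_⟩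
      · have : m' + d - 1 + 1 = m' + d := by omega
        rw [this]; exact hdle'
      · rcases Nat.eq_or_lt_of_le hdpos with h1 | h1
        · have : m' + d - 1 = m' := by omega
          rw [this]; exact hm't
        · have hnm : d - 1 ∉ D := Nat.notMem_of_lt_sInf (by omega)
          have : ¬ (0 < d - 1 ∧ ((((π ^ (m' + (d - 1))) z : Box n) : ℤ) : ℝ) ≤ t) := hnm
          push_neg at this
          have h2 := this (by omega)
          have h3 : m' + (d - 1) = m' + d - 1 := by omega
          rw [h3] at h2
          linarith
    have hBdd : BddAbove B := ⟨P, fun j hj => le_of_lt hj.1⟩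
    have hiL : iLast t π ∈ B := by
      have : iLast t π = sSup B := rfl
      rw [this]; exact Nat.sSup_mem hBne hBdd
    obtain ⟨_, hle, hlt⟩ := hiL
    refine ⟨?_, hle⟩
    have hstep : (π ^ (iLast t π + 1)) z = π ((π ^ iLast t π) z) := by
      rw [pow_succ', Equiv.Perm.mul_apply]
    rw [hstep]
    calc t - W < (((π ^ iLast t π) z : ℤ) : ℝ) - W := by linarith
      _ ≤ ((π ((π ^ iLast t π) z) : ℤ) : ℝ) := (hdisp _).1

open scoped Classical in
/-- There is a universal constant `C > 0` such that for all
`n, W ≥ 1`, every real `λ ≥ 0` and every permutation `τ` of `[-n,n]`, the number of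
`π ∈ S_W` with `max C_π(0) > λ + 2W` and `Φ_{λ+2W}(π) = τ` is at most `C W²`. -/
theorem uncrossing_preimage_bound :
    ∃ C : ℝ, 0 < C ∧ ∀ (n W : ℕ), 1 ≤ n → 1 ≤ W → ∀ lam : ℝ, 0 ≤ lam →
      ∀ τ : Equiv.Perm (Box n),
        ((Finset.univ.filter fun π : Equiv.Perm (Box n) =>
          π ∈ SW n W ∧ lam + 2 * W < ((maxCycle π (boxZero n) : ℤ) : ℝ) ∧
            Phi (lam + 2 * W) π = τ).card : ℝ) ≤ C * W ^ 2 := by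
  refine ⟨1, one_pos, ?_⟩
  intro n W hn hW lam hlam τ
  set t : ℝ := lam + 2 * W with htdef
  have htnn : (0 : ℝ) ≤ t := by positivity
  set g : Equiv.Perm (Box n) → ℤ × ℤ := fun π =>
    ((((π ^ (iFirst t π + 1)) (boxZero n) : Box n) : ℤ),
     (((π ^ (iLast t π + 1)) (boxZero n) : Box n) : ℤ)) with hg
  have hcard : (Finset.univ.filter fun π : Equiv.Perm (Box n) =>
      π ∈ SW n W ∧ t < ((maxCycle π (boxZero n) : ℤ) : ℝ) ∧
        Phi t π = τ).card ≤
      ((Finset.Ioc ⌊t⌋ (⌊t⌋ + (W : ℤ))) ×ˢ (Finset.Ioc (⌊t⌋ - (W : ℤ)) ⌊t⌋)).card := by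
    apply Finset.card_le_card_of_injOn g
    · intro π hπ
      simp only [Finset.mem_coe, Finset.mem_filter, Finset.mem_univ, true_and] at hπ
      obtain ⟨hSWπ, hmax, _⟩ := hπ
      obtain ⟨⟨ha1, ha2⟩, hb1, hb2⟩ := crossing_bounds htnn hSWπ hmax
      simp only [hg, Finset.mem_coe, Finset.mem_product, Finset.mem_Ioc]
      refine ⟨⟨Int.floor_lt.mpr ha1, ?_⟩, ?_, Int.le_floor.mpr hb2⟩
      · have := Int.le_floor.mpr ha2
        rwa [show t + (W : ℝ) = t + ((W : ℤ) : ℝ) by push_cast; ring,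
          Int.floor_add_intCast] at this
      · have h1 : ((⌊t⌋ - (W : ℤ) : ℤ) : ℝ) <
            ((((π ^ (iLast t π + 1)) (boxZero n) : Box n) : ℤ) : ℝ) := by
          have : ((⌊t⌋ - (W : ℤ) : ℤ) : ℝ) ≤ t - W := by
            push_cast
            have := Int.floor_le t
            linarith
          linarith
        exact_mod_cast h1
    · intro π₁ h₁ π₂ h₂ heq
      simp only [Finset.coe_filter, Set.mem_setOf_eq, Finset.mem_univ, true_and] at h₁ h₂
      have hΦ₁ : π₁ = τ * Equiv.swap ((π₁ ^ (iFirst t π₁ + 1)) (boxZero n))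
          ((π₁ ^ (iLast t π₁ + 1)) (boxZero n)) := by
        have := h₁.2.2
        rw [Phi] at this
        rw [← this, mul_assoc, Equiv.swap_mul_self, mul_one]
      have hΦ₂ : π₂ = τ * Equiv.swap ((π₂ ^ (iFirst t π₂ + 1)) (boxZero n))
          ((π₂ ^ (iLast t π₂ + 1)) (boxZero n)) := by
        have := h₂.2.2
        rw [Phi] at this
        rw [← this, mul_assoc, Equiv.swap_mul_self, mul_one]
      have ha : (π₁ ^ (iFirst t π₁ + 1)) (boxZero n) =
          (π₂ ^ (iFirst t π₂ + 1)) (boxZero n) :=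
        Subtype.ext (congrArg Prod.fst heq)
      have hb : (π₁ ^ (iLast t π₁ + 1)) (boxZero n) =
          (π₂ ^ (iLast t π₂ + 1)) (boxZero n) :=
        Subtype.ext (congrArg Prod.snd heq)
      rw [hΦ₁, hΦ₂, ha, hb]
  have hcard2 : ((Finset.Ioc ⌊t⌋ (⌊t⌋ + (W : ℤ))) ×ˢ
      (Finset.Ioc (⌊t⌋ - (W : ℤ)) ⌊t⌋)).card = W * W := by
    rw [Finset.card_product, Int.card_Ioc, Int.card_Ioc]
    simp
  calc ((Finset.univ.filter fun π : Equiv.Perm (Box n) =>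
        π ∈ SW n W ∧ t < ((maxCycle π (boxZero n) : ℤ) : ℝ) ∧
          Phi t π = τ).card : ℝ)
      ≤ ((W * W : ℕ) : ℝ) := by exact_mod_cast hcard2 ▸ hcard
    _ = 1 * (W : ℝ) ^ 2 := by push_cast; ring
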